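/- arXiv:2305.16089 — 5 statements merged into one kernel-verified Lean document; each statement's English description precedes it below -/
import Mathlib

section
/- For every integer n ≥ 3: (i) for every integer h ≥ 2n − 2, q_{n,n}(h) = q_{n−2,n−2}(h − (2n−2)) + (6n − 8); and (ii) for every integer h, q_{n,n}(h) ≤ q_{n−2,n−2}(h − (2n−2)) + (6n − 8), where the equality and inequality are in ℤ ∪ {+∞}. -/
open Classical in
/-- The quantum lower bound function `q_{n,n}` for the Khovanov homology of `T(n,n)`:
`+∞` outside `[0, ⌊n²/2⌋]`, `n² - 2n` at `h = 0`, and `n² + 2⌈h/2⌉ - 2p` for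
`2(p+1)(q-1) < h ≤ 2pq` where `p ≥ q ≥ 1`, `p + q = n` (with `q = n - p`). -/
noncomputable def qnn (n h : ℤ) : WithTop ℤ :=
  if h < 0 ∨ n ^ 2 / 2 < h then ⊤
  else if h = 0 then ((n ^ 2 - 2 * n : ℤ) : WithTop ℤ)
  else if hc : ∃ p : ℤ, n - p ≤ p ∧ 1 ≤ n - p ∧
      2 * (p + 1) * (n - p - 1) < h ∧ h ≤ 2 * p * (n - p)
    then ((n ^ 2 + 2 * ((h + 1) / 2) - 2 * hc.choose : ℤ) : WithTop ℤ)
  else ⊤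

lemma qnn_spec (n h p : ℤ) (h1 : n - p ≤ p) (h2 : 1 ≤ n - p)
    (h3 : 2 * (p + 1) * (n - p - 1) < h) (h4 : h ≤ 2 * p * (n - p)) :
    qnn n h = ((n ^ 2 + 2 * ((h + 1) / 2) - 2 * p : ℤ) : WithTop ℤ) := by
  have hp0 : 0 < h := by nlinarith
  have hhi : h ≤ n ^ 2 / 2 := by
    rw [Int.le_ediv_iff_mul_le (by norm_num : (0:ℤ) < 2)]
    nlinarith [sq_nonneg (n - 2 * p)]
  have hc : ∃ p : ℤ, n - p ≤ p ∧ 1 ≤ n - p ∧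
      2 * (p + 1) * (n - p - 1) < h ∧ h ≤ 2 * p * (n - p) := ⟨p, h1, h2, h3, h4⟩
  have hchoose : hc.choose = p := by
    obtain ⟨a1, a2, a3, a4⟩ := hc.choose_spec
    set q := hc.choose with hq
    rcases lt_trichotomy q p with hlt | heq | hgt
    · exfalso
      nlinarith [mul_nonneg (by omega : (0:ℤ) ≤ p + 1 - q) (by omega : (0:ℤ) ≤ p + q + 1 - n)]
    · exact heq
    · exfalso
      nlinarith [mul_nonneg (by omega : (0:ℤ) ≤ q + 1 - p) (by omega : (0:ℤ) ≤ p + q + 1 - n)]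
  rw [qnn, if_neg (by push_neg; exact ⟨hp0.le, hhi⟩), if_neg hp0.ne', dif_pos hc, hchoose]

lemma qnn_exists (n h : ℤ) (hn : 1 ≤ n) (h0 : 0 < h) (hhi : h ≤ n ^ 2 / 2) :
    ∃ p : ℤ, n - p ≤ p ∧ 1 ≤ n - p ∧ 2 * (p + 1) * (n - p - 1) < h ∧ h ≤ 2 * p * (n - p) := by
  have h2 : h * 2 ≤ n ^ 2 := (Int.le_ediv_iff_mul_le (by norm_num : (0:ℤ) < 2)).mp hhi
  set P : ℤ → Prop := fun p => n - p ≤ p ∧ h ≤ 2 * p * (n - p) with hP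
  have Hbdd : ∃ b : ℤ, ∀ z : ℤ, P z → z ≤ b := by
    refine ⟨n, fun z hz => ?_⟩
    by_contra hc
    push_neg at hc
    obtain ⟨hz1, hz2⟩ := hz
    nlinarith
  have Hinh : ∃ z : ℤ, P z := by
    rcases Int.even_or_odd n with ⟨k, hk⟩ | ⟨k, hk⟩
    · exact ⟨k, by omega, by nlinarith⟩
    · refine ⟨k + 1, by omega, ?_⟩
      obtain ⟨K, hK⟩ : ∃ K : ℤ, K = k * k := ⟨_, rfl⟩
      have h2' : h * 2 ≤ 4 * K + 4 * k + 1 := by nlinarith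
      have h3' : h ≤ 2 * K + 2 * k := by omega
      nlinarith
  obtain ⟨p, ⟨b1, b2⟩, hmax⟩ := Int.exists_greatest_of_bdd Hbdd Hinh
  have hq1 : 1 ≤ n - p := by
    by_contra hc
    push_neg at hc
    nlinarith
  refine ⟨p, b1, hq1, ?_, b2⟩
  by_contra hc
  push_neg at hc
  have : P (p + 1) := ⟨by omega, by linarith⟩
  have := hmax _ this
  omega

lemma floor_shift (n : ℤ) : (n - 2) ^ 2 / 2 = n ^ 2 / 2 - (2 * n - 2) := by
  have hB : n ^ 2 = (n - 2) ^ 2 + (4 * n - 4) := by ring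
  rw [hB]
  generalize (n - 2) ^ 2 = X
  omega

/-- Equation (a) of Lemma 5.3: for `n ≥ 3`, the shifted function
`q_(n-2,n-2)[2n-2](6n-8)` equals `q_(n,n)` on `h ≥ 2n - 2` and bounds it above
everywhere. -/
theorem qnn_shift (n : ℤ) (hn : 3 ≤ n) :
    (∀ h : ℤ, 2 * n - 2 ≤ h →
      qnn n h = qnn (n - 2) (h - (2 * n - 2)) + ((6 * n - 8 : ℤ) : WithTop ℤ)) ∧
    (∀ h : ℤ,
      qnn n h ≤ qnn (n - 2) (h - (2 * n - 2)) + ((6 * n - 8 : ℤ) : WithTop ℤ)) := by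
  have key : ∀ h : ℤ, 2 * n - 2 ≤ h →
      qnn n h = qnn (n - 2) (h - (2 * n - 2)) + ((6 * n - 8 : ℤ) : WithTop ℤ) := by
    intro h hh
    by_cases htop : n ^ 2 / 2 < h
    · have hL : qnn n h = ⊤ := by rw [qnn, if_pos (Or.inr htop)]
      have hR : qnn (n - 2) (h - (2 * n - 2)) = ⊤ := by
        rw [qnn, if_pos (Or.inr (by linarith [floor_shift n]))]
      rw [hL, hR, top_add]
    · push_neg at htop
      by_cases h0 : h = 2 * n - 2
      · subst h0
        rw [qnn_spec n (2 * n - 2) (n - 1) (by omega) (by omega) (by nlinarith) (by nlinarith)]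
        have hz : 2 * n - 2 - (2 * n - 2) = 0 := by ring
        have hne : ¬((0:ℤ) < 0 ∨ (n - 2) ^ 2 / 2 < 0) := by
          push_neg
          exact ⟨le_rfl, Int.ediv_nonneg (sq_nonneg _) (by norm_num)⟩
        rw [hz, qnn, if_neg hne, if_pos rfl, ← WithTop.coe_add, WithTop.coe_inj]
        have he : (2 * n - 2 + 1) / 2 = n - 1 := by omega
        rw [he]; ring
      · have hlt : 2 * n - 2 < h := by omega
        obtain ⟨p, a1, a2, a3, a4⟩ := qnn_exists n h (by omega) (by omega) htop
        have hp2 : p ≤ n - 2 := by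
          by_contra hc
          have hpe : p = n - 1 := by omega
          subst hpe
          nlinarith
        rw [qnn_spec n h p a1 a2 a3 a4,
            qnn_spec (n - 2) (h - (2 * n - 2)) (p - 1) (by omega) (by omega)
              (by nlinarith) (by nlinarith),
            ← WithTop.coe_add, WithTop.coe_inj]
        have he : (h - (2 * n - 2) + 1) / 2 = (h + 1) / 2 - (n - 1) := by omega
        rw [he]; ring
  refine ⟨key, fun h => ?_⟩
  by_cases hh : 2 * n - 2 ≤ h
  · exact (key h hh).le
  · have hR : qnn (n - 2) (h - (2 * n - 2)) = ⊤ := by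
      rw [qnn, if_pos (Or.inl (by omega))]
    rw [hR, top_add]
    exact le_top
end

section
/- For every integer n ≥ 3 and every integer h with h ≤ ⌊n²/2⌋ + ⌊n/2⌋ − 1, one has q_{n+1,n}(h) ≤ q_{n−1,n−2}(h − (2n−2)) + (6n − 6) in ℤ ∪ {+∞}, where q_{n−1,n−2} denotes the function q_{m+1,m} with m = n − 2. -/
open Classical in
/-- The quantum lower bound function `q_{n+1,n}` for the Khovanov homology of `T(n+1,n)`:
`+∞` outside `[0, ⌊n²/2⌋ + ⌊n/2⌋]`; `q_{n,n}(h) + n - 3` at `h = 2pq + 1 ≤ ⌊n²/2⌋`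
(`p ≥ q ≥ 1`, `p + q = n`); `q_{n,n}(h) + n - 1` at other `h` with `0 ≤ h ≤ ⌊n²/2⌋`;
and `⌊n²/2⌋ + 2h - 1` for `⌊n²/2⌋ ≤ h ≤ ⌊n²/2⌋ + ⌊n/2⌋`. -/
noncomputable def qn1n (n h : ℤ) : WithTop ℤ :=
  if h < 0 ∨ n ^ 2 / 2 + n / 2 < h then ⊤
  else if ∃ p : ℤ, n - p ≤ p ∧ 1 ≤ n - p ∧ h = 2 * p * (n - p) + 1 ∧ h ≤ n ^ 2 / 2
    then qnn n h + ((n - 3 : ℤ) : WithTop ℤ)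
  else if h ≤ n ^ 2 / 2 then qnn n h + ((n - 1 : ℤ) : WithTop ℤ)
  else ((n ^ 2 / 2 + 2 * h - 1 : ℤ) : WithTop ℤ)

lemma p_unique (n h p1 p2 : ℤ)
    (ha1 : n - p1 ≤ p1) (hb1 : 1 ≤ n - p1)
    (hc1 : 2 * (p1 + 1) * (n - p1 - 1) < h) (hd1 : h ≤ 2 * p1 * (n - p1))
    (ha2 : n - p2 ≤ p2) (hb2 : 1 ≤ n - p2)
    (hc2 : 2 * (p2 + 1) * (n - p2 - 1) < h) (hd2 : h ≤ 2 * p2 * (n - p2)) :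
    p1 = p2 := by
  by_contra hne
  rcases lt_or_gt_of_ne hne with hlt | hlt
  · nlinarith [mul_nonneg (show (0:ℤ) ≤ p2 - p1 - 1 by linarith)
      (show (0:ℤ) ≤ p1 + 1 + p2 - n by linarith)]
  · nlinarith [mul_nonneg (show (0:ℤ) ≤ p1 - p2 - 1 by linarith)
      (show (0:ℤ) ≤ p2 + 1 + p1 - n by linarith)]

lemma qnn_eval (n h p : ℤ) (hp : n - p ≤ p) (hq : 1 ≤ n - p)
    (hl : 2 * (p + 1) * (n - p - 1) < h) (hu : h ≤ 2 * p * (n - p)) :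
    qnn n h = ((n ^ 2 + 2 * ((h + 1) / 2) - 2 * p : ℤ) : WithTop ℤ) := by
  have hp1 : 1 ≤ p := le_trans hq hp
  have hpos : 0 < h := lt_of_le_of_lt (by nlinarith) hl
  have hle : h ≤ n ^ 2 / 2 := by
    rw [Int.le_ediv_iff_mul_le (by norm_num)]
    nlinarith [sq_nonneg (n - 2 * p)]
  have hex : ∃ p' : ℤ, n - p' ≤ p' ∧ 1 ≤ n - p' ∧
      2 * (p' + 1) * (n - p' - 1) < h ∧ h ≤ 2 * p' * (n - p') := ⟨p, hp, hq, hl, hu⟩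
  unfold qnn
  rw [if_neg (by simp only [not_or, not_lt]; exact ⟨hpos.le, hle⟩), if_neg hpos.ne',
    dif_pos hex]
  obtain ⟨c1, c2, c3, c4⟩ := hex.choose_spec
  rw [p_unique n h hex.choose p c1 c2 c3 c4 hp hq hl hu]

lemma qnn_zero (n : ℤ) : qnn n 0 = ((n ^ 2 - 2 * n : ℤ) : WithTop ℤ) := by
  unfold qnn
  rw [if_neg, if_pos rfl]
  simp only [not_or, not_lt]
  exact ⟨le_refl 0, Int.ediv_nonneg (sq_nonneg n) (by norm_num)⟩

lemma qnn_top (n h : ℤ) (h0 : h ≠ 0)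
    (hw : ¬∃ p : ℤ, n - p ≤ p ∧ 1 ≤ n - p ∧
      2 * (p + 1) * (n - p - 1) < h ∧ h ≤ 2 * p * (n - p)) :
    qnn n h = ⊤ := by
  unfold qnn
  by_cases hr : h < 0 ∨ n ^ 2 / 2 < h
  · rw [if_pos hr]
  · rw [if_neg hr, if_neg h0, dif_neg hw]

/-- Equation (b) of Lemma 5.3: for `n ≥ 3` and `h ≤ ⌊n²/2⌋ + ⌊n/2⌋ - 1`,
`q_(n+1,n)(h) ≤ q_(n-1,n-2)(h - (2n-2)) + (6n - 6)`. -/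
theorem qn1n_shift_le (n : ℤ) (hn : 3 ≤ n) (h : ℤ)
    (hmax : h ≤ n ^ 2 / 2 + n / 2 - 1) :
    qn1n n h ≤ qn1n (n - 2) (h - (2 * n - 2)) + ((6 * n - 6 : ℤ) : WithTop ℤ) := by
  set m : ℤ := n - 2 with hm
  set h' : ℤ := h - (2 * n - 2) with hh'
  -- floor arithmetic facts
  have hmsq0 : m ^ 2 = n ^ 2 + (-(2 * n - 2)) * 2 := by rw [hm]; ring
  have hmsq : m ^ 2 = n ^ 2 - 4 * n + 4 := by rw [hm]; ring
  have F1 : m ^ 2 / 2 = n ^ 2 / 2 - (2 * n - 2) := by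
    rw [hmsq0, Int.add_mul_ediv_right _ _ (by norm_num : (2:ℤ) ≠ 0)]; ring
  have F2 : m / 2 = n / 2 - 1 := by
    have hmm : m = n + (-1) * 2 := by rw [hm]; ring
    rw [hmm, Int.add_mul_ediv_right _ _ (by norm_num : (2:ℤ) ≠ 0)]
    omega
  have hn2pos : 1 ≤ n / 2 := by omega
  -- main case split on the RHS
  by_cases hr : h' < 0 ∨ m ^ 2 / 2 + m / 2 < h'
  · -- RHS is ⊤
    have hR : qn1n m h' = ⊤ := by rw [qn1n, if_pos hr]
    rw [hR, top_add]
    exact le_top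
  push_neg at hr
  obtain ⟨hr0, hr1⟩ := hr
  have hpos : 0 < h := by linarith
  have hrange : ¬(h < 0 ∨ n ^ 2 / 2 + n / 2 < h) := by
    simp only [not_or, not_lt]
    exact ⟨hpos.le, by linarith⟩
  by_cases htail : m ^ 2 / 2 < h'
  · -- tail region on both sides
    have hhgt : ¬ h ≤ n ^ 2 / 2 := by simp only [not_le]; linarith
    have hSm : ¬∃ p : ℤ, m - p ≤ p ∧ 1 ≤ m - p ∧ h' = 2 * p * (m - p) + 1 ∧
        h' ≤ m ^ 2 / 2 := by
      rintro ⟨p, -, -, -, hle⟩; exact absurd hle (not_le.2 htail)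
    have hSn : ¬∃ p : ℤ, n - p ≤ p ∧ 1 ≤ n - p ∧ h = 2 * p * (n - p) + 1 ∧
        h ≤ n ^ 2 / 2 := by
      rintro ⟨p, -, -, -, hle⟩; exact absurd hle hhgt
    have hR : qn1n m h' = ((m ^ 2 / 2 + 2 * h' - 1 : ℤ) : WithTop ℤ) := by
      rw [qn1n, if_neg (by simp only [not_or, not_lt]; exact ⟨hr0, hr1⟩),
        if_neg hSm, if_neg (not_le.2 htail)]
    have hL : qn1n n h = ((n ^ 2 / 2 + 2 * h - 1 : ℤ) : WithTop ℤ) := by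
      rw [qn1n, if_neg hrange, if_neg hSn, if_neg hhgt]
    rw [hL, hR, ← WithTop.coe_add, WithTop.coe_le_coe]
    linarith
  push_neg at htail
  -- now 0 ≤ h' ≤ m²/2 ; h ≤ n²/2
  have hhle : h ≤ n ^ 2 / 2 := by linarith
  have hrangem : ¬(h' < 0 ∨ m ^ 2 / 2 + m / 2 < h') := by
    simp only [not_or, not_lt]
    exact ⟨hr0, hr1⟩
  by_cases h0 : h' = 0
  · -- h = 2n - 2
    have hh2 : h = 2 * n - 2 := by omega
    have hval : qnn n h = ((n ^ 2 : ℤ) : WithTop ℤ) := by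
      rw [qnn_eval n h (n - 1) (by omega) (by omega)
        (by nlinarith [hh2]) (by nlinarith [hh2])]
      have hd : (h + 1) / 2 = n - 1 := by omega
      exact congrArg _ (by rw [hd]; ring)
    have hSm : ¬∃ p : ℤ, m - p ≤ p ∧ 1 ≤ m - p ∧ h' = 2 * p * (m - p) + 1 ∧
        h' ≤ m ^ 2 / 2 := by
      rintro ⟨p, hp1, hp2, heq, -⟩
      nlinarith [mul_pos (show (0:ℤ) < p by linarith) (show (0:ℤ) < m - p by linarith)]
    have hSn : ¬∃ p : ℤ, n - p ≤ p ∧ 1 ≤ n - p ∧ h = 2 * p * (n - p) + 1 ∧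
        h ≤ n ^ 2 / 2 := by
      rintro ⟨p, hp1, hp2, heq, -⟩
      have heq' : h = 2 * (p * (n - p)) + 1 := by linear_combination heq
      set k := p * (n - p)
      omega
    have hR : qn1n m h' = ((m ^ 2 - 2 * m : ℤ) : WithTop ℤ) + ((m - 1 : ℤ) : WithTop ℤ) := by
      rw [qn1n, if_neg hrangem, if_neg hSm, if_pos (by linarith), h0, qnn_zero]
    have hL : qn1n n h = ((n ^ 2 : ℤ) : WithTop ℤ) + ((n - 1 : ℤ) : WithTop ℤ) := by
      rw [qn1n, if_neg hrange, if_neg hSn, if_pos hhle, hval]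
    rw [hL, hR, ← WithTop.coe_add, ← WithTop.coe_add, ← WithTop.coe_add,
      WithTop.coe_le_coe]
    linarith
  -- h' ≥ 1
  by_cases hw : ∃ p : ℤ, m - p ≤ p ∧ 1 ≤ m - p ∧
      2 * (p + 1) * (m - p - 1) < h' ∧ h' ≤ 2 * p * (m - p)
  · obtain ⟨p', c1, c2, c3, c4⟩ := hw
    have hq1 : 1 ≤ p' := le_trans c2 c1
    have hVm := qnn_eval m h' p' c1 c2 c3 c4
    have hVn := qnn_eval n h (p' + 1) (by omega) (by omega)
      (by nlinarith [hh', hm, c3]) (by nlinarith [hh', hm, c4])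
    have hdiv : (h + 1) / 2 = (h' + 1) / 2 + (n - 1) := by omega
    by_cases hSm : ∃ p : ℤ, m - p ≤ p ∧ 1 ≤ m - p ∧ h' = 2 * p * (m - p) + 1 ∧
        h' ≤ m ^ 2 / 2
    · obtain ⟨ps, s1, s2, s3, s4⟩ := hSm
      have hSn : ∃ p : ℤ, n - p ≤ p ∧ 1 ≤ n - p ∧ h = 2 * p * (n - p) + 1 ∧
          h ≤ n ^ 2 / 2 := by
        refine ⟨ps + 1, by omega, by omega, ?_, hhle⟩
        have hkey : 2 * (ps + 1) * (n - (ps + 1)) = 2 * ps * (m - ps) + 2 * n - 2 := by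
          rw [hm]; ring
        linarith [s3, hkey]
      have hR : qn1n m h' = ((m ^ 2 + 2 * ((h' + 1) / 2) - 2 * p' : ℤ) : WithTop ℤ)
          + ((m - 3 : ℤ) : WithTop ℤ) := by
        rw [qn1n, if_neg hrangem, if_pos ⟨ps, s1, s2, s3, s4⟩, hVm]
      have hL : qn1n n h = ((n ^ 2 + 2 * ((h + 1) / 2) - 2 * (p' + 1) : ℤ) : WithTop ℤ)
          + ((n - 3 : ℤ) : WithTop ℤ) := by
        rw [qn1n, if_neg hrange, if_pos hSn, hVn]
      rw [hL, hR, ← WithTop.coe_add, ← WithTop.coe_add, ← WithTop.coe_add,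
        WithTop.coe_le_coe]
      linarith
    · have hR : qn1n m h' = ((m ^ 2 + 2 * ((h' + 1) / 2) - 2 * p' : ℤ) : WithTop ℤ)
          + ((m - 1 : ℤ) : WithTop ℤ) := by
        rw [qn1n, if_neg hrangem, if_neg hSm, if_pos (by linarith), hVm]
      by_cases hSn : ∃ p : ℤ, n - p ≤ p ∧ 1 ≤ n - p ∧ h = 2 * p * (n - p) + 1 ∧
          h ≤ n ^ 2 / 2
      · have hL : qn1n n h = ((n ^ 2 + 2 * ((h + 1) / 2) - 2 * (p' + 1) : ℤ) : WithTop ℤ)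
            + ((n - 3 : ℤ) : WithTop ℤ) := by
          rw [qn1n, if_neg hrange, if_pos hSn, hVn]
        rw [hL, hR, ← WithTop.coe_add, ← WithTop.coe_add, ← WithTop.coe_add,
          WithTop.coe_le_coe]
        linarith
      · have hL : qn1n n h = ((n ^ 2 + 2 * ((h + 1) / 2) - 2 * (p' + 1) : ℤ) : WithTop ℤ)
            + ((n - 1 : ℤ) : WithTop ℤ) := by
          rw [qn1n, if_neg hrange, if_neg hSn, if_pos hhle, hVn]
        rw [hL, hR, ← WithTop.coe_add, ← WithTop.coe_add, ← WithTop.coe_add,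
          WithTop.coe_le_coe]
        linarith
  · -- no witness: RHS qnn is ⊤
    have htop : qnn m h' = ⊤ := qnn_top m h' h0 hw
    have hR : qn1n m h' = ⊤ := by
      rw [qn1n, if_neg hrangem]
      by_cases hSm : ∃ p : ℤ, m - p ≤ p ∧ 1 ≤ m - p ∧ h' = 2 * p * (m - p) + 1 ∧
          h' ≤ m ^ 2 / 2
      · rw [if_pos hSm, htop, top_add]
      · rw [if_neg hSm, if_pos (by linarith), htop, top_add]
    rw [hR, top_add]
    exact le_top
end

section
/- For every integer m ≥ 1 and every integer h with h ≠ 1 and h ≤ ⌊m²/2⌋ + ⌊m/2⌋, one has q_{m+1,m}(h) ≤ q_{m+1,m}(h − 1) + 2 in ℤ ∪ {+∞}. -/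
lemma p_unique_s6 {n h p p' : ℤ}
    (a1 : n - p ≤ p) (a3 : 2 * (p + 1) * (n - p - 1) < h) (a4 : h ≤ 2 * p * (n - p))
    (b1 : n - p' ≤ p') (b3 : 2 * (p' + 1) * (n - p' - 1) < h) (b4 : h ≤ 2 * p' * (n - p')) :
    p = p' := by
  by_contra hne
  rcases lt_or_gt_of_ne hne with hlt | hlt
  · have key : 0 ≤ (p' - (p + 1)) * (p' + (p + 1) - n) := mul_nonneg (by omega) (by omega)
    nlinarith
  · have key : 0 ≤ (p - (p' + 1)) * (p + (p' + 1) - n) := mul_nonneg (by omega) (by omega)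
    nlinarith

lemma qnn_eq {n h p : ℤ} (h1 : n - p ≤ p) (h2 : 1 ≤ n - p)
    (h3 : 2 * (p + 1) * (n - p - 1) < h) (h4 : h ≤ 2 * p * (n - p)) :
    qnn n h = ((n ^ 2 + 2 * ((h + 1) / 2) - 2 * p : ℤ) : WithTop ℤ) := by
  have hp1 : 1 ≤ p := by omega
  have hp0 : 0 < h := lt_of_le_of_lt (by nlinarith) h3
  have hle : h ≤ n ^ 2 / 2 := by
    have h5 : 2 * (2 * p * (n - p)) ≤ n ^ 2 := by nlinarith [sq_nonneg (n - 2 * p)]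
    rw [Int.le_ediv_iff_mul_le (by norm_num : (0:ℤ) < 2)]
    linarith
  rw [qnn, if_neg (by push_neg; exact ⟨by omega, hle⟩), if_neg (by omega : ¬ h = 0)]
  have hex : ∃ q : ℤ, n - q ≤ q ∧ 1 ≤ n - q ∧
      2 * (q + 1) * (n - q - 1) < h ∧ h ≤ 2 * q * (n - q) := ⟨p, h1, h2, h3, h4⟩
  rw [dif_pos hex]
  obtain ⟨b1, _, b3, b4⟩ := hex.choose_spec
  rw [p_unique_s6 b1 b3 b4 h1 h3 h4]

lemma exists_p_aux (n h : ℤ) (hh : 0 < h) : ∀ k : ℕ, ∀ p : ℤ, 1 ≤ n - p → n - p ≤ p →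
    h ≤ 2 * p * (n - p) → (n - p).toNat ≤ k →
    ∃ p' : ℤ, n - p' ≤ p' ∧ 1 ≤ n - p' ∧
      2 * (p' + 1) * (n - p' - 1) < h ∧ h ≤ 2 * p' * (n - p') := by
  intro k
  induction k with
  | zero => intro p h1 _ _ hk; omega
  | succ k ih =>
    intro p h1 h2 h3 hk
    by_cases hc : 2 * (p + 1) * (n - p - 1) < h
    · exact ⟨p, h2, h1, hc, h3⟩
    · push_neg at hc
      have hp1 : 1 ≤ p := by omega
      have hq : 1 ≤ n - (p + 1) := by nlinarith
      exact ih (p + 1) hq (by omega) (by calc h ≤ 2 * (p + 1) * (n - p - 1) := hc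
        _ = 2 * (p + 1) * (n - (p + 1)) := by ring) (by omega)

lemma exists_p (n h : ℤ) (hn : 2 ≤ n) (hh : 0 < h) (hN : h ≤ n ^ 2 / 2) :
    ∃ p' : ℤ, n - p' ≤ p' ∧ 1 ≤ n - p' ∧
      2 * (p' + 1) * (n - p' - 1) < h ∧ h ≤ 2 * p' * (n - p') := by
  rcases Int.even_or_odd n with ⟨k, hk⟩ | ⟨k, hk⟩
  · subst hk
    have hN2 : (k + k) ^ 2 / 2 = 2 * (k * k) := by
      rw [show (k + k) ^ 2 = 2 * (k * k) * 2 from by ring,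
        Int.mul_ediv_cancel _ two_ne_zero]
    refine exists_p_aux _ h hh (k.toNat) k (by omega) (by omega) ?_ (by omega)
    have : h ≤ 2 * (k * k) := by rw [← hN2]; exact hN
    nlinarith
  · subst hk
    have hN2 : (2 * k + 1) ^ 2 / 2 = 2 * (k + 1) * k := by
      rw [show (2 * k + 1) ^ 2 = 1 + (2 * (k + 1) * k) * 2 from by ring,
        Int.add_mul_ediv_right _ _ two_ne_zero]
      norm_num
    refine exists_p_aux _ h hh (k.toNat) (k + 1) (by omega) (by omega) ?_ (by omega)
    calc h ≤ (2 * k + 1) ^ 2 / 2 := hN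
      _ = 2 * (k + 1) * k := hN2
      _ = 2 * (k + 1) * (2 * k + 1 - (k + 1)) := by ring

lemma N_even (n : ℤ) : Even (n ^ 2 / 2) := by
  rcases Int.even_or_odd n with ⟨k, hk⟩ | ⟨k, hk⟩ <;> subst hk
  · rw [show (k + k) ^ 2 = 2 * (k * k) * 2 from by ring,
      Int.mul_ediv_cancel _ two_ne_zero]
    exact ⟨k * k, by ring⟩
  · rw [show (2 * k + 1) ^ 2 = 1 + (k * k + k) * 2 * 2 from by ring]
    rw [Int.add_mul_ediv_right _ _ two_ne_zero]
    exact ⟨k * k + k, by norm_num; ring⟩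

lemma qnn_at_N (m : ℤ) (hm : 2 ≤ m) :
    qnn m (m ^ 2 / 2) = ((3 * (m ^ 2 / 2) - m : ℤ) : WithTop ℤ) := by
  rcases Int.even_or_odd m with ⟨k, hk⟩ | ⟨k, hk⟩ <;> subst hk
  · have hN2 : (k + k) ^ 2 / 2 = 2 * (k * k) := by
      rw [show (k + k) ^ 2 = 2 * (k * k) * 2 from by ring,
        Int.mul_ediv_cancel _ two_ne_zero]
    have hk1 : 1 ≤ k := by omega
    rw [hN2, qnn_eq (p := k) (by omega) (by omega) (by nlinarith) (by nlinarith)]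
    have hdiv : (2 * (k * k) + 1) / 2 = k * k := by
      rw [show 2 * (k * k) + 1 = 1 + (k * k) * 2 from by ring,
        Int.add_mul_ediv_right _ _ two_ne_zero]
      norm_num
    rw [hdiv]
    norm_cast
    ring
  · have hN2 : (2 * k + 1) ^ 2 / 2 = 2 * (k + 1) * k := by
      rw [show (2 * k + 1) ^ 2 = 1 + (2 * (k + 1) * k) * 2 from by ring,
        Int.add_mul_ediv_right _ _ two_ne_zero]
      norm_num
    have hk1 : 1 ≤ k := by omega
    rw [hN2, qnn_eq (p := k + 1) (by omega) (by omega) (by nlinarith) (by nlinarith)]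
    have hdiv : (2 * (k + 1) * k + 1) / 2 = k * k + k := by
      rw [show 2 * (k + 1) * k + 1 = 1 + (k * k + k) * 2 from by ring,
        Int.add_mul_ediv_right _ _ two_ne_zero]
      norm_num
    rw [hdiv]
    norm_cast
    ring

lemma not_spec_even {n h : ℤ} (he : Even h) :
    ¬ ∃ p : ℤ, n - p ≤ p ∧ 1 ≤ n - p ∧ h = 2 * p * (n - p) + 1 ∧ h ≤ n ^ 2 / 2 := by
  rintro ⟨p, _, _, hp, _⟩
  obtain ⟨t, ht⟩ := he
  have h2 : t + t = 2 * p * (n - p) + 1 := by rw [← ht]; exact hp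
  have h3 : ∃ c : ℤ, t + t = 2 * c + 1 := ⟨p * (n - p), by linear_combination h2⟩
  obtain ⟨c, hc⟩ := h3
  omega

/-- Equation (e) of Lemma 5.3: for `m ≥ 1` and every integer `h ≠ 1` with
`h ≤ ⌊m²/2⌋ + ⌊m/2⌋`, `q_(m+1,m)(h) ≤ q_(m+1,m)(h - 1) + 2`. -/
theorem qn1n_step_one (m : ℤ) (hm : 1 ≤ m) (h : ℤ) (h1 : h ≠ 1)
    (hmax : h ≤ m ^ 2 / 2 + m / 2) :
    qn1n m h ≤ qn1n m (h - 1) + ((2 : ℤ) : WithTop ℤ) := by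
  have hK : 0 ≤ m / 2 := Int.ediv_nonneg (by omega) (by norm_num)
  have hN0 : 0 ≤ m ^ 2 / 2 := Int.ediv_nonneg (sq_nonneg m) (by norm_num)
  by_cases h0 : h ≤ 0
  · have hT : qn1n m (h - 1) = ⊤ := by rw [qn1n, if_pos (Or.inl (by omega))]
    rw [hT]
    simp
  push_neg at h0
  have h2 : 2 ≤ h := by omega
  have hm2 : 2 ≤ m := by
    rcases eq_or_lt_of_le hm with he | hl
    · exfalso
      rw [← he] at hmax
      norm_num at hmax
      omega
    · omega
  have hrange : ¬ (h < 0 ∨ m ^ 2 / 2 + m / 2 < h) := by push_neg; exact ⟨by omega, hmax⟩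
  have hrange' : ¬ (h - 1 < 0 ∨ m ^ 2 / 2 + m / 2 < h - 1) := by
    push_neg; exact ⟨by omega, by linarith⟩
  by_cases htail : m ^ 2 / 2 < h
  · have hnsp : ¬ ∃ p : ℤ, m - p ≤ p ∧ 1 ≤ m - p ∧
        h = 2 * p * (m - p) + 1 ∧ h ≤ m ^ 2 / 2 := by
      rintro ⟨p, _, _, _, hp4⟩; linarith
    have hnmid : ¬ h ≤ m ^ 2 / 2 := by linarith
    rw [qn1n, if_neg hrange, if_neg hnsp, if_neg hnmid]
    by_cases htail2 : m ^ 2 / 2 < h - 1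
    · have hnsp' : ¬ ∃ p : ℤ, m - p ≤ p ∧ 1 ≤ m - p ∧
          h - 1 = 2 * p * (m - p) + 1 ∧ h - 1 ≤ m ^ 2 / 2 := by
        rintro ⟨p, _, _, _, hp4⟩; linarith
      rw [qn1n, if_neg hrange', if_neg hnsp', if_neg (by linarith : ¬ h - 1 ≤ m ^ 2 / 2)]
      simp only [← WithTop.coe_add, WithTop.coe_le_coe]
      linarith
    · have hhN : h - 1 = m ^ 2 / 2 := le_antisymm (not_lt.1 htail2) (by linarith)
      have hnsp' : ¬ ∃ p : ℤ, m - p ≤ p ∧ 1 ≤ m - p ∧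
          h - 1 = 2 * p * (m - p) + 1 ∧ h - 1 ≤ m ^ 2 / 2 :=
        not_spec_even (hhN ▸ N_even m)
      rw [qn1n, if_neg hrange', if_neg hnsp', if_pos (by linarith : h - 1 ≤ m ^ 2 / 2),
        hhN, qnn_at_N m hm2]
      simp only [← WithTop.coe_add, WithTop.coe_le_coe]
      linarith
  · -- middle region : 2 ≤ h ≤ N
    push_neg at htail
    obtain ⟨p, hp1, hp2, hp3, hp4⟩ := exists_p m h hm2 (by omega) htail
    have hqh := qnn_eq hp1 hp2 hp3 hp4
    by_cases hbot : h = 2 * (p + 1) * (m - p - 1) + 1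
    · -- h is the bottom of the p-interval plus one
      have hq2 : 2 ≤ m - p := by
        by_contra hq
        have hq1 : m - p = 1 := by omega
        have : h = 1 := by
          rw [hbot, show m - p - 1 = 0 from by omega]; ring
        exact h1 this
      have c1 : m - (p + 1) ≤ p + 1 := by omega
      have c2 : 1 ≤ m - (p + 1) := by omega
      have c3 : 2 * (p + 1 + 1) * (m - (p + 1) - 1) < h - 1 := by
        have : h - 1 = 2 * (p + 1) * (m - p - 1) := by omega
        rw [this]; nlinarith
      have c4 : h - 1 ≤ 2 * (p + 1) * (m - (p + 1)) := by
        have : h - 1 = 2 * (p + 1) * (m - p - 1) := by omega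
        rw [this]; exact le_of_eq (by ring)
      have hqh' := qnn_eq c1 c2 c3 c4
      have hsp : ∃ q : ℤ, m - q ≤ q ∧ 1 ≤ m - q ∧
          h = 2 * q * (m - q) + 1 ∧ h ≤ m ^ 2 / 2 :=
        ⟨p + 1, c1, c2, by rw [hbot]; ring, htail⟩
      obtain ⟨c, hc⟩ : ∃ c : ℤ, h = 2 * c + 1 :=
        ⟨(p + 1) * (m - p - 1), by linear_combination hbot⟩
      have hnsp' : ¬ ∃ q : ℤ, m - q ≤ q ∧ 1 ≤ m - q ∧
          h - 1 = 2 * q * (m - q) + 1 ∧ h - 1 ≤ m ^ 2 / 2 :=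
        not_spec_even ⟨c, by omega⟩
      rw [qn1n, if_neg hrange, if_pos hsp,
        qn1n, if_neg hrange', if_neg hnsp',
        if_pos (by linarith : h - 1 ≤ m ^ 2 / 2), hqh, hqh']
      simp only [← WithTop.coe_add, WithTop.coe_le_coe]
      have e1 : (h + 1) / 2 = c + 1 := by omega
      have e2 : (h - 1 + 1) / 2 = c := by omega
      rw [e1, e2]
      linarith
    · -- h - 1 lies in the same interval as h
      have hB : 2 * (p + 1) * (m - p - 1) < h - 1 := by
        rcases eq_or_lt_of_le (by linarith : 2 * (p + 1) * (m - p - 1) + 1 ≤ h) with he | hl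
        · exact absurd he.symm hbot
        · linarith
      have hqh' := qnn_eq hp1 hp2 hB (by linarith : h - 1 ≤ 2 * p * (m - p))
      rcases Int.even_or_odd h with ⟨c, hc⟩ | ⟨c, hc⟩
      · -- h even
        have e1 : (h + 1) / 2 = c := by omega
        have e2 : (h - 1 + 1) / 2 = c := by omega
        have hnsp : ¬ ∃ q : ℤ, m - q ≤ q ∧ 1 ≤ m - q ∧
            h = 2 * q * (m - q) + 1 ∧ h ≤ m ^ 2 / 2 := not_spec_even ⟨c, hc⟩
        rw [qn1n, if_neg hrange, if_neg hnsp, if_pos htail, qn1n, if_neg hrange']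
        by_cases hsp' : ∃ q : ℤ, m - q ≤ q ∧ 1 ≤ m - q ∧
            h - 1 = 2 * q * (m - q) + 1 ∧ h - 1 ≤ m ^ 2 / 2
        · rw [if_pos hsp', hqh, hqh', e1, e2]
          simp only [← WithTop.coe_add, WithTop.coe_le_coe]
          linarith
        · rw [if_neg hsp', if_pos (by linarith : h - 1 ≤ m ^ 2 / 2), hqh, hqh', e1, e2]
          simp only [← WithTop.coe_add, WithTop.coe_le_coe]
          linarith
      · -- h odd
        have e1 : (h + 1) / 2 = c + 1 := by omega
        have e2 : (h - 1 + 1) / 2 = c := by omega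
        have hnsp : ¬ ∃ q : ℤ, m - q ≤ q ∧ 1 ≤ m - q ∧
            h = 2 * q * (m - q) + 1 ∧ h ≤ m ^ 2 / 2 := by
          rintro ⟨p', b1, b2, hpe, _⟩
          have d3 : 2 * (p' + 1) * (m - p' - 1) < h - 1 := by nlinarith
          have d4 : h - 1 ≤ 2 * p' * (m - p') := by linarith [hpe]
          have := p_unique_s6 hp1 hB (by linarith : h - 1 ≤ 2 * p * (m - p)) b1 d3 d4
          rw [← this] at hpe
          linarith
        have hnsp' : ¬ ∃ q : ℤ, m - q ≤ q ∧ 1 ≤ m - q ∧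
            h - 1 = 2 * q * (m - q) + 1 ∧ h - 1 ≤ m ^ 2 / 2 :=
          not_spec_even ⟨c, by omega⟩
        rw [qn1n, if_neg hrange, if_neg hnsp, if_pos htail,
          qn1n, if_neg hrange', if_neg hnsp',
          if_pos (by linarith : h - 1 ≤ m ^ 2 / 2), hqh, hqh', e1, e2]
        simp only [← WithTop.coe_add, WithTop.coe_le_coe]
        linarith
end

section
/- Let n ≥ 3 be an integer and let h be an integer with 0 < h ≤ ⌊(n−1)²/2⌋. Let p ≥ q ≥ 1 be integers with p + q = n and 2(p+1)(q−1) < h ≤ 2pq, and let p' ≥ q' ≥ 1 be integers with p' + q' = n − 1 and 2(p'+1)(q'−1) < h ≤ 2p'q'. Then q_{n−1,n−1}(h) + (2n − 3) = q_{n,n}(h) + 2(q' − q), an equality of integers (both values of these q-functions are finite). -/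
private lemma qnn_unique {n h p₁ p₂ : ℤ}
    (h1 : n - p₁ ≤ p₁) (h3 : 2 * (p₁ + 1) * (n - p₁ - 1) < h)
    (h4 : h ≤ 2 * p₁ * (n - p₁))
    (h5 : n - p₂ ≤ p₂) (h7 : 2 * (p₂ + 1) * (n - p₂ - 1) < h)
    (h8 : h ≤ 2 * p₂ * (n - p₂)) :
    p₁ = p₂ := by
  by_contra hne
  rcases lt_or_gt_of_ne hne with hlt | hlt
  · nlinarith [mul_nonneg (by linarith : (0:ℤ) ≤ p₂ - p₁ - 1)
      (by linarith : (0:ℤ) ≤ p₁ + p₂ + 1 - n)]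
  · nlinarith [mul_nonneg (by linarith : (0:ℤ) ≤ p₁ - p₂ - 1)
      (by linarith : (0:ℤ) ≤ p₁ + p₂ + 1 - n)]

private lemma qnn_val (n h p q : ℤ) (h0 : 0 < h) (hmax : h ≤ n ^ 2 / 2)
    (hpq : q ≤ p) (hq : 1 ≤ q) (hsum : p + q = n)
    (hlo : 2 * (p + 1) * (q - 1) < h) (hhi : h ≤ 2 * p * q) :
    qnn n h = ((n ^ 2 + 2 * ((h + 1) / 2) - 2 * p : ℤ) : WithTop ℤ) := by
  have hqe : n - p = q := by linarith
  have hc : ∃ r : ℤ, n - r ≤ r ∧ 1 ≤ n - r ∧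
      2 * (r + 1) * (n - r - 1) < h ∧ h ≤ 2 * r * (n - r) :=
    ⟨p, by rw [hqe]; exact ⟨hpq, hq, hlo, hhi⟩⟩
  have hch : hc.choose = p := by
    obtain ⟨a, b, c, d⟩ := hc.choose_spec
    exact qnn_unique a c d (hqe ▸ hpq) (hqe ▸ hlo) (hqe ▸ hhi)
  have hA : ¬(h < 0 ∨ n ^ 2 / 2 < h) := by push_neg; exact ⟨h0.le, hmax⟩
  have hB : ¬ h = 0 := h0.ne'
  simp only [qnn, if_neg hA, if_neg hB, dif_pos hc, hch]

/-- The displayed identity (5.2) in the proof of Lemma 5.3: if `h` lies in the interval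
indexed by `(p, q)` at level `n` and in the interval indexed by `(p', q')` at level
`n - 1`, then `q_(n-1,n-1)(h) + (2n - 3) = q_(n,n)(h) + 2(q' - q)`. -/
theorem qnn_compare (n h p q p' q' : ℤ) (hn : 3 ≤ n) (h0 : 0 < h)
    (hmax : h ≤ (n - 1) ^ 2 / 2)
    (hpq : q ≤ p) (hq : 1 ≤ q) (hsum : p + q = n)
    (hlo : 2 * (p + 1) * (q - 1) < h) (hhi : h ≤ 2 * p * q)
    (hpq' : q' ≤ p') (hq' : 1 ≤ q') (hsum' : p' + q' = n - 1)
    (hlo' : 2 * (p' + 1) * (q' - 1) < h) (hhi' : h ≤ 2 * p' * q') :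
    qnn (n - 1) h + ((2 * n - 3 : ℤ) : WithTop ℤ)
      = qnn n h + ((2 * (q' - q) : ℤ) : WithTop ℤ) := by
  have hmaxn : h ≤ n ^ 2 / 2 := le_trans hmax (by
    apply Int.ediv_le_ediv (by norm_num); nlinarith)
  rw [qnn_val (n - 1) h p' q' h0 hmax hpq' hq' hsum' hlo' hhi',
    qnn_val n h p q h0 hmaxn hpq hq hsum hlo hhi]
  norm_cast
  ring_nf
  omega
end

section
/- Let n ≥ 3 be an integer and let h be an integer with 0 < h ≤ ⌊(n−1)²/2⌋. Let p ≥ q ≥ 1 be integers with p + q = n and 2(p+1)(q−1) < h ≤ 2pq, and let p' ≥ q' ≥ 1 be integers with p' + q' = n − 1 and 2(p'+1)(q'−1) < h ≤ 2p'q'. Then q' ≥ q; moreover, if h = 2(p'+1)(q'−1) + 1 and q' ≥ 2, then q' > q. -/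
/-- Key combinatorial step in the proof of inequality (d) of Lemma 5.3: if `h` lies in
the interval indexed by `(p, q)` at level `n` and in the interval indexed by `(p', q')`
at level `n - 1`, then `q' ≥ q`; moreover if `h = 2(p'+1)(q'-1) + 1` and `q' ≥ 2`
then `q' > q`. -/
theorem interval_pair_compare (n h p q p' q' : ℤ) (hn : 3 ≤ n) (h0 : 0 < h)
    (hmax : h ≤ (n - 1) ^ 2 / 2)
    (hpq : q ≤ p) (hq : 1 ≤ q) (hsum : p + q = n)
    (hlo : 2 * (p + 1) * (q - 1) < h) (hhi : h ≤ 2 * p * q)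
    (hpq' : q' ≤ p') (hq' : 1 ≤ q') (hsum' : p' + q' = n - 1)
    (hlo' : 2 * (p' + 1) * (q' - 1) < h) (hhi' : h ≤ 2 * p' * q') :
    q ≤ q' ∧ (h = 2 * (p' + 1) * (q' - 1) + 1 → 2 ≤ q' → q < q') := by
  have hle : q ≤ q' := by
    by_contra hc
    push_neg at hc
    have h1 : q' ≤ q - 1 := by omega
    nlinarith [mul_nonneg (by omega : (0:ℤ) ≤ q - 1 - q') (by omega : (0:ℤ) ≤ n - q - q'),
      mul_nonneg (by omega : (0:ℤ) ≤ q - 1) (by omega : (0:ℤ) ≤ q - 1)]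
  refine ⟨hle, fun heq hq2 => ?_⟩
  rcases lt_or_eq_of_le hle with h' | h'
  · exact h'
  · exfalso
    subst h'
    nlinarith
end
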